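/- (Lemma 1, matrix form of CARMS) Let C ≥ 1 and N ≥ 2, let p : Fin C → ℝ be a probability vector, let f : Fin C → ℝ, let R : Fin C → Fin C → ℝ be symmetric (R(i,j) = R(j,i)), and let z : Fin N → Fin C. Define the N×N matrix O by O(n,m) = (1/(N−1)) · (if n = m then 0 else R(z(n), z(m))), and the diagonal matrix D by D(n,n) = Σ_m O(n,m) and D(n,m) = 0 for n ≠ m. Then (1/N) · Σ_{n,m : Fin N} f(z(n)) · (D(n,m) − O(n,m)) • (e_{z(m)} − p) = (1/(N·(N−1))) · Σ over ordered pairs n ≠ m of (1/2) · (f(z(n)) − f(z(m))) · R(z(n), z(m)) • (e_{z(n)} − e_{z(m)}), as an identity of vectors in Fin C → ℝ. -/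

import Mathlib

open Finset

/-- The one-hot vector `e_i : Fin C → ℝ` with `(e_i)_k = if k = i then 1 else 0`. -/
def oneHot {C : ℕ} (i : Fin C) : Fin C → ℝ :=
  fun k => if k = i then 1 else 0

lemma double_antisymm {N : ℕ} (F : Fin N → Fin N → ℝ) (h : ∀ n m, F n m = - F m n) :
    ∑ n, ∑ m, F n m = 0 := by
  have h1 : ∑ n, ∑ m, F n m = ∑ m, ∑ n, F n m := Finset.sum_comm
  have h2 : ∑ m : Fin N, ∑ n : Fin N, F n m = - ∑ n, ∑ m, F n m := by
    rw [← Finset.sum_neg_distrib]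
    refine Finset.sum_congr rfl fun n _ => ?_
    rw [← Finset.sum_neg_distrib]
    exact Finset.sum_congr rfl fun m _ => by rw [h m n]
  linarith [h1, h2]

/-- Lemma 1, matrix form of CARMS: the matrix form
`(1/N)·f(Z)ᵀ(D − O)(Z − 1pᵀ)` equals the pairwise form of the CARMS estimator. -/
theorem carms_matrix_form {C N : ℕ} (hC : 1 ≤ C) (hN : 2 ≤ N) (p : Fin C → ℝ)
    (hp0 : ∀ i, 0 ≤ p i) (hp1 : ∑ i, p i = 1) (f : Fin C → ℝ)
    (R : Fin C → Fin C → ℝ) (hR : ∀ i j, R i j = R j i)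
    (z : Fin N → Fin C) (O D : Fin N → Fin N → ℝ)
    (hO : ∀ n m, O n m = (1 / ((N : ℝ) - 1)) * (if n = m then 0 else R (z n) (z m)))
    (hD : ∀ n m, D n m = if n = m then ∑ k, O n k else 0) :
    (1 / (N : ℝ)) • ∑ n, ∑ m, (f (z n) * (D n m - O n m)) • (oneHot (z m) - p)
      = (1 / ((N : ℝ) * ((N : ℝ) - 1))) •
          ∑ n, ∑ m ∈ univ.filter (fun m => m ≠ n),
            ((1 / 2) * (f (z n) - f (z m)) * R (z n) (z m))
              • (oneHot (z n) - oneHot (z m)) := by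
  funext k
  simp only [Pi.smul_apply, Finset.sum_apply, Pi.sub_apply, smul_eq_mul]
  set g : Fin N → ℝ := fun n => oneHot (z n) k with hg
  -- Step 1: the inner sum of the LHS
  have step1 : ∀ n : Fin N,
      ∑ m, f (z n) * (D n m - O n m) * (g m - p k)
        = (1 / ((N : ℝ) - 1)) * ∑ m, f (z n) * R (z n) (z m) * (g n - g m) := by
    intro n
    have hDsum : ∑ m, f (z n) * D n m * (g m - p k)
        = f (z n) * (∑ j, O n j) * (g n - p k) := by
      simp only [hD, mul_ite, ite_mul, mul_zero, zero_mul]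
      rw [Finset.sum_ite_eq, if_pos (Finset.mem_univ n)]
    have key : ∀ m : Fin N, f (z n) * O n m * g n - f (z n) * O n m * g m
        = (1 / ((N : ℝ) - 1)) * (f (z n) * R (z n) (z m) * (g n - g m)) := by
      intro m
      by_cases hm : n = m
      · subst hm; rw [hO]; simp
      · rw [hO, if_neg hm]; ring
    calc ∑ m, f (z n) * (D n m - O n m) * (g m - p k)
        = ∑ m, (f (z n) * D n m * (g m - p k) - f (z n) * O n m * (g m - p k)) :=
          Finset.sum_congr rfl fun m _ => by ring
      _ = (∑ m, f (z n) * D n m * (g m - p k)) - ∑ m, f (z n) * O n m * (g m - p k) :=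
          Finset.sum_sub_distrib _ _
      _ = f (z n) * (∑ j, O n j) * (g n - p k) - ∑ m, f (z n) * O n m * (g m - p k) := by
          rw [hDsum]
      _ = (∑ m, f (z n) * O n m * (g n - p k)) - ∑ m, f (z n) * O n m * (g m - p k) := by
          rw [Finset.mul_sum, Finset.sum_mul]
      _ = ∑ m, (f (z n) * O n m * (g n - p k) - f (z n) * O n m * (g m - p k)) :=
          (Finset.sum_sub_distrib _ _).symm
      _ = ∑ m, (f (z n) * O n m * g n - f (z n) * O n m * g m) :=
          Finset.sum_congr rfl fun m _ => by ring
      _ = ∑ m, (1 / ((N : ℝ) - 1)) * (f (z n) * R (z n) (z m) * (g n - g m)) :=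
          Finset.sum_congr rfl fun m _ => key m
      _ = (1 / ((N : ℝ) - 1)) * ∑ m, f (z n) * R (z n) (z m) * (g n - g m) :=
          (Finset.mul_sum _ _ _).symm
  -- Step 2: remove the filter on the RHS
  have step2 : ∀ n : Fin N,
      ∑ m ∈ univ.filter (fun m => m ≠ n),
          (1 / 2) * (f (z n) - f (z m)) * R (z n) (z m) * (g n - g m)
        = ∑ m, (1 / 2) * (f (z n) - f (z m)) * R (z n) (z m) * (g n - g m) := by
    intro n
    rw [Finset.sum_filter]
    refine Finset.sum_congr rfl fun m _ => ?_
    by_cases hm : m = n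
    · subst hm; simp
    · rw [if_pos hm]
  -- Step 3: symmetrization
  have step3 : ∑ n, ∑ m, f (z n) * R (z n) (z m) * (g n - g m)
      = ∑ n, ∑ m, (1 / 2) * (f (z n) - f (z m)) * R (z n) (z m) * (g n - g m) := by
    have anti : ∑ n, ∑ m, (1 / 2) * (f (z n) + f (z m)) * R (z n) (z m) * (g n - g m) = 0 := by
      apply double_antisymm
      intro n m
      rw [hR (z n) (z m)]
      ring
    have split : ∑ n, ∑ m, f (z n) * R (z n) (z m) * (g n - g m)
        = (∑ n, ∑ m, (1 / 2) * (f (z n) - f (z m)) * R (z n) (z m) * (g n - g m))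
          + ∑ n, ∑ m, (1 / 2) * (f (z n) + f (z m)) * R (z n) (z m) * (g n - g m) := by
      rw [← Finset.sum_add_distrib]
      refine Finset.sum_congr rfl fun n _ => ?_
      rw [← Finset.sum_add_distrib]
      exact Finset.sum_congr rfl fun m _ => by ring
    rw [split, anti, add_zero]
  -- Put everything together
  have hLHS : ∑ n, ∑ m, f (z n) * (D n m - O n m) * (g m - p k)
      = (1 / ((N : ℝ) - 1)) * ∑ n, ∑ m, f (z n) * R (z n) (z m) * (g n - g m) := by
    rw [Finset.mul_sum]
    exact Finset.sum_congr rfl fun n _ => step1 n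
  have hRHS : ∑ n, ∑ m ∈ univ.filter (fun m => m ≠ n),
      (1 / 2) * (f (z n) - f (z m)) * R (z n) (z m) * (g n - g m)
      = ∑ n, ∑ m, (1 / 2) * (f (z n) - f (z m)) * R (z n) (z m) * (g n - g m) :=
    Finset.sum_congr rfl fun n _ => step2 n
  show (1 / (N : ℝ)) * ∑ n, ∑ m, f (z n) * (D n m - O n m) * (g m - p k)
      = (1 / ((N : ℝ) * ((N : ℝ) - 1))) * ∑ n, ∑ m ∈ univ.filter (fun m => m ≠ n),
          (1 / 2) * (f (z n) - f (z m)) * R (z n) (z m) * (g n - g m)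
  rw [hLHS, hRHS, ← step3, ← mul_assoc]
  congr 1
  rw [div_mul_div_comm, one_mul]
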